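/- arXiv:2411.02139 — 2 statements merged into one kernel-verified Lean document; each statement's English description precedes it below -/
import Mathlib

section
/- Let A₁,…,A_L be k×k symmetric PSD matrices and B₁,…,B_L be d×d symmetric PSD matrices, and suppose λ_min(A_ℓ)·λ_min(B_ℓ) > 0 for all ℓ. Then κ(∑_{ℓ=1}^L A_ℓ ⊗ B_ℓ) ≤ ∑_{ℓ=1}^L γ_ℓ · κ(A_ℓ)·κ(B_ℓ), where γ_ℓ = λ_min(A_ℓ)λ_min(B_ℓ) / ∑_{i=1}^L λ_min(A_i)λ_min(B_i) and κ(M) = λ_max(M)/λ_min(M). -/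
open Matrix Kronecker

section AuxLemmas
variable {n : Type*} [Fintype n] [DecidableEq n]

private lemma diag_sub_eq {M : Matrix n n ℝ} (hM : M.IsHermitian) (c : ℝ) :
    c • (1 : Matrix n n ℝ) - diagonal (RCLike.ofReal ∘ hM.eigenvalues) =
      diagonal fun i => c - hM.eigenvalues i := by
  ext i j
  by_cases h : i = j <;> simp [diagonal, one_apply, h]

private lemma smul_one_sub_eq {M : Matrix n n ℝ} (hM : M.IsHermitian) (c : ℝ) :
    c • (1 : Matrix n n ℝ) - M =
      (hM.eigenvectorUnitary : Matrix n n ℝ) * (diagonal fun i => c - hM.eigenvalues i) *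
        star (hM.eigenvectorUnitary : Matrix n n ℝ) := by
  set U : Matrix n n ℝ := (hM.eigenvectorUnitary : Matrix n n ℝ)
  have hU : U * star U = 1 := (Matrix.mem_unitaryGroup_iff).mp (hM.eigenvectorUnitary).2
  rw [← diag_sub_eq hM c, mul_sub, sub_mul, mul_smul_comm, mul_one, smul_mul_assoc, hU]
  conv_lhs => rw [hM.spectral_theorem, Unitary.conjStarAlgAut_apply]

private lemma psd_smul_one_sub {M : Matrix n n ℝ} (hM : M.IsHermitian) {c : ℝ}
    (h : ∀ i, hM.eigenvalues i ≤ c) : (c • (1 : Matrix n n ℝ) - M).PosSemidef := by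
  rw [smul_one_sub_eq hM c, Matrix.star_eq_conjTranspose]
  exact (posSemidef_diagonal_iff.mpr fun i => sub_nonneg.2 (h i)).mul_mul_conjTranspose_same _

private lemma psd_sub_smul_one {M : Matrix n n ℝ} (hM : M.IsHermitian) {c : ℝ}
    (h : ∀ i, c ≤ hM.eigenvalues i) : (M - c • (1 : Matrix n n ℝ)).PosSemidef := by
  have key : M - c • (1 : Matrix n n ℝ) =
      (hM.eigenvectorUnitary : Matrix n n ℝ) * (diagonal fun i => hM.eigenvalues i - c) *
        star (hM.eigenvectorUnitary : Matrix n n ℝ) := by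
    have h1 : (diagonal fun i => hM.eigenvalues i - c) =
        -(diagonal fun i => c - hM.eigenvalues i) := by
      ext i j; by_cases hij : i = j <;> simp [hij]
    rw [h1, mul_neg, neg_mul, ← smul_one_sub_eq hM c, neg_sub]
  rw [key, Matrix.star_eq_conjTranspose]
  exact (posSemidef_diagonal_iff.mpr fun i => sub_nonneg.2 (h i)).mul_mul_conjTranspose_same _

private lemma dot_self_eigenvector {M : Matrix n n ℝ} (hM : M.IsHermitian) (i : n) :
    ⇑(hM.eigenvectorBasis i) ⬝ᵥ ⇑(hM.eigenvectorBasis i) = 1 := by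
  have h1 := hM.eigenvectorBasis.orthonormal.1 i
  have h2 : (inner ℝ (hM.eigenvectorBasis i) (hM.eigenvectorBasis i) : ℝ) = 1 := by
    rw [real_inner_self_eq_norm_sq, h1]; norm_num
  rw [← h2, PiLp.inner_apply]
  simp [dotProduct, mul_comm, sq]

private lemma eig_le_of_psd {M : Matrix n n ℝ} (hM : M.IsHermitian) {c : ℝ}
    (h : (c • (1 : Matrix n n ℝ) - M).PosSemidef) (i : n) : hM.eigenvalues i ≤ c := by
  have hv := hM.mulVec_eigenvectorBasis i
  have h2 := h.dotProduct_mulVec_nonneg ⇑(hM.eigenvectorBasis i)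
  rw [sub_mulVec, smul_mulVec, one_mulVec, hv] at h2
  simp only [star_trivial, dotProduct_sub, dotProduct_smul, smul_eq_mul,
    dot_self_eigenvector hM i, mul_one] at h2
  linarith

private lemma le_eig_of_psd {M : Matrix n n ℝ} (hM : M.IsHermitian) {c : ℝ}
    (h : (M - c • (1 : Matrix n n ℝ)).PosSemidef) (i : n) : c ≤ hM.eigenvalues i := by
  have hv := hM.mulVec_eigenvectorBasis i
  have h2 := h.dotProduct_mulVec_nonneg ⇑(hM.eigenvectorBasis i)
  rw [sub_mulVec, smul_mulVec, one_mulVec, hv] at h2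
  simp only [star_trivial, dotProduct_sub, dotProduct_smul, smul_eq_mul,
    dot_self_eigenvector hM i, mul_one] at h2
  linarith

private lemma smul_one_psd {c : ℝ} (hc : 0 ≤ c) : (c • (1 : Matrix n n ℝ)).PosSemidef := by
  have h1 : c • (1 : Matrix n n ℝ) = diagonal (fun _ => c) := by
    ext i j; by_cases h : i = j <;> simp [h, one_apply]
  rw [h1]
  exact posSemidef_diagonal_iff.mpr fun _ => hc

end AuxLemmas

private lemma kron_psd {k d : ℕ} {A : Matrix (Fin k) (Fin k) ℝ} {B : Matrix (Fin d) (Fin d) ℝ}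
    (hA : A.PosSemidef) (hB : B.PosSemidef) : (A ⊗ₖ B).PosSemidef := by
  exact hA.kronecker hB

private lemma psd_sum {m : Type*} [Fintype m] [DecidableEq m] {L : ℕ}
    (f : Fin L → Matrix m m ℝ) (h : ∀ l, (f l).PosSemidef) : (∑ l, f l).PosSemidef :=
  Finset.sum_induction f _ (fun _ _ => Matrix.PosSemidef.add) (Matrix.PosSemidef.zero)
    (fun l _ => h l)

private lemma kron_id1 {k d : ℕ} (A : Matrix (Fin k) (Fin k) ℝ) (B : Matrix (Fin d) (Fin d) ℝ)
    (α β : ℝ) :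
    (α * β) • (1 : Matrix (Fin k × Fin d) (Fin k × Fin d) ℝ) - A ⊗ₖ B =
      (α • (1 : Matrix (Fin k) (Fin k) ℝ) - A) ⊗ₖ (β • (1 : Matrix (Fin d) (Fin d) ℝ)) +
        A ⊗ₖ (β • (1 : Matrix (Fin d) (Fin d) ℝ) - B) := by
  ext ⟨i, j⟩ ⟨i', j'⟩
  simp only [Matrix.sub_apply, Matrix.add_apply, Matrix.smul_apply, kroneckerMap_apply,
    one_apply, Prod.mk.injEq, smul_eq_mul]
  by_cases h1 : i = i' <;> by_cases h2 : j = j' <;> simp [h1, h2] <;> ring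

private lemma kron_id2 {k d : ℕ} (A : Matrix (Fin k) (Fin k) ℝ) (B : Matrix (Fin d) (Fin d) ℝ)
    (a b : ℝ) :
    A ⊗ₖ B - (a * b) • (1 : Matrix (Fin k × Fin d) (Fin k × Fin d) ℝ) =
      (A - a • (1 : Matrix (Fin k) (Fin k) ℝ)) ⊗ₖ (b • (1 : Matrix (Fin d) (Fin d) ℝ)) +
        A ⊗ₖ (B - b • (1 : Matrix (Fin d) (Fin d) ℝ)) := by
  ext ⟨i, j⟩ ⟨i', j'⟩
  simp only [Matrix.sub_apply, Matrix.add_apply, Matrix.smul_apply, kroneckerMap_apply,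
    one_apply, Prod.mk.injEq, smul_eq_mul]
  by_cases h1 : i = i' <;> by_cases h2 : j = j' <;> simp [h1, h2] <;> ring


private lemma main_aux {L k d : ℕ} (A : Fin L → Matrix (Fin k) (Fin k) ℝ)
    (B : Fin L → Matrix (Fin d) (Fin d) ℝ)
    (hA : ∀ ℓ, (A ℓ).PosSemidef) (hB : ∀ ℓ, (B ℓ).PosSemidef)
    (hS : (∑ ℓ, A ℓ ⊗ₖ B ℓ).IsHermitian)
    (a b α β : Fin L → ℝ)
    (haa : ∀ ℓ, a ℓ = ⨅ i, (hA ℓ).1.eigenvalues i)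
    (hbb : ∀ ℓ, b ℓ = ⨅ i, (hB ℓ).1.eigenvalues i)
    (hαα : ∀ ℓ, α ℓ = ⨆ i, (hA ℓ).1.eigenvalues i)
    (hββ : ∀ ℓ, β ℓ = ⨆ i, (hB ℓ).1.eigenvalues i)
    (hL : 0 < L) (hk : 0 < k) (hd : 0 < d)
    (hpos : ∀ ℓ, 0 < a ℓ * b ℓ) :
    (⨆ i, hS.eigenvalues i) / (⨅ i, hS.eigenvalues i) ≤
      ∑ ℓ, (a ℓ * b ℓ / ∑ j, a j * b j) * ((α ℓ / a ℓ) * (β ℓ / b ℓ)) := by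
  haveI : Nonempty (Fin k) := ⟨⟨0, hk⟩⟩
  haveI : Nonempty (Fin d) := ⟨⟨0, hd⟩⟩
  haveI : Nonempty (Fin L) := ⟨⟨0, hL⟩⟩
  -- positivity
  have ha_pos : ∀ ℓ, 0 < a ℓ := by
    intro ℓ
    have h0 : 0 ≤ a ℓ := by rw [haa ℓ]; exact le_ciInf fun i => (hA ℓ).eigenvalues_nonneg i
    rcases h0.lt_or_eq with h | h
    · exact h
    · exfalso; have := hpos ℓ; rw [← h, zero_mul] at this; exact lt_irrefl 0 this
  have hb_pos : ∀ ℓ, 0 < b ℓ := by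
    intro ℓ
    have h0 : 0 ≤ b ℓ := by rw [hbb ℓ]; exact le_ciInf fun i => (hB ℓ).eigenvalues_nonneg i
    rcases h0.lt_or_eq with h | h
    · exact h
    · exfalso; have := hpos ℓ; rw [← h, mul_zero] at this; exact lt_irrefl 0 this
  -- eigenvalue bounds per layer
  have hAle : ∀ ℓ i, (hA ℓ).1.eigenvalues i ≤ α ℓ := fun ℓ i => by
    rw [hαα ℓ]; exact le_ciSup (Finite.bddAbove_range _) i
  have hBle : ∀ ℓ i, (hB ℓ).1.eigenvalues i ≤ β ℓ := fun ℓ i => by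
    rw [hββ ℓ]; exact le_ciSup (Finite.bddAbove_range _) i
  have hAge : ∀ ℓ i, a ℓ ≤ (hA ℓ).1.eigenvalues i := fun ℓ i => by
    rw [haa ℓ]; exact ciInf_le (Finite.bddBelow_range _) i
  have hBge : ∀ ℓ i, b ℓ ≤ (hB ℓ).1.eigenvalues i := fun ℓ i => by
    rw [hbb ℓ]; exact ciInf_le (Finite.bddBelow_range _) i
  have hα_nonneg : ∀ ℓ, 0 ≤ α ℓ :=
    fun ℓ => le_trans ((hA ℓ).eigenvalues_nonneg (Classical.arbitrary _)) (hAle ℓ _)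
  have hβ_nonneg : ∀ ℓ, 0 ≤ β ℓ :=
    fun ℓ => le_trans ((hB ℓ).eigenvalues_nonneg (Classical.arbitrary _)) (hBle ℓ _)
  -- upper PSD bound
  have hup : ((∑ ℓ, α ℓ * β ℓ) • (1 : Matrix (Fin k × Fin d) (Fin k × Fin d) ℝ)
      - ∑ ℓ, A ℓ ⊗ₖ B ℓ).PosSemidef := by
    have hrw : (∑ ℓ, α ℓ * β ℓ) • (1 : Matrix (Fin k × Fin d) (Fin k × Fin d) ℝ)
        - ∑ ℓ, A ℓ ⊗ₖ B ℓ = ∑ ℓ, ((α ℓ * β ℓ) • 1 - A ℓ ⊗ₖ B ℓ) := by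
      rw [Finset.sum_sub_distrib, ← Finset.sum_smul]
    rw [hrw]
    refine psd_sum _ fun ℓ => ?_
    rw [kron_id1]
    exact ((kron_psd (psd_smul_one_sub (hA ℓ).1 (hAle ℓ)) (smul_one_psd (hβ_nonneg ℓ)))).add
      (kron_psd (hA ℓ) (psd_smul_one_sub (hB ℓ).1 (hBle ℓ)))
  -- lower PSD bound
  have hlo : ((∑ ℓ, A ℓ ⊗ₖ B ℓ)
      - (∑ ℓ, a ℓ * b ℓ) • (1 : Matrix (Fin k × Fin d) (Fin k × Fin d) ℝ)).PosSemidef := by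
    have hrw : (∑ ℓ, A ℓ ⊗ₖ B ℓ) - (∑ ℓ, a ℓ * b ℓ) • (1 : Matrix (Fin k × Fin d) (Fin k × Fin d) ℝ)
        = ∑ ℓ, (A ℓ ⊗ₖ B ℓ - (a ℓ * b ℓ) • 1) := by
      rw [Finset.sum_sub_distrib, ← Finset.sum_smul]
    rw [hrw]
    refine psd_sum _ fun ℓ => ?_
    rw [kron_id2]
    exact ((kron_psd (psd_sub_smul_one (hA ℓ).1 (hAge ℓ)) (smul_one_psd (hb_pos ℓ).le))).add
      (kron_psd (hA ℓ) (psd_sub_smul_one (hB ℓ).1 (hBge ℓ)))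
  -- eigenvalue bounds on S
  have hsup : (⨆ i, hS.eigenvalues i) ≤ ∑ ℓ, α ℓ * β ℓ :=
    ciSup_le fun i => eig_le_of_psd hS hup i
  have hinf : (∑ ℓ, a ℓ * b ℓ) ≤ ⨅ i, hS.eigenvalues i :=
    le_ciInf fun i => le_eig_of_psd hS hlo i
  have hc : 0 < ∑ ℓ, a ℓ * b ℓ :=
    Finset.sum_pos (fun ℓ _ => hpos ℓ) Finset.univ_nonempty
  have hrhs : ∑ ℓ, (a ℓ * b ℓ / ∑ j, a j * b j) * ((α ℓ / a ℓ) * (β ℓ / b ℓ))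
      = (∑ ℓ, α ℓ * β ℓ) / (∑ j, a j * b j) := by
    rw [Finset.sum_div]
    refine Finset.sum_congr rfl fun ℓ _ => ?_
    have h1 : a ℓ ≠ 0 := (ha_pos ℓ).ne'
    have h2 : b ℓ ≠ 0 := (hb_pos ℓ).ne'
    have h3 : (∑ j, a j * b j) ≠ 0 := hc.ne'
    field_simp
  rw [hrhs]
  exact div_le_div₀ (Finset.sum_nonneg fun ℓ _ => mul_nonneg (hα_nonneg ℓ) (hβ_nonneg ℓ))
    hsup hc hinf

/-- Convex-combination condition number bound for a sum of Kronecker products of PSD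
matrices (the abstract core of the L-layer Gauss–Newton bound):
`κ(∑ Aℓ ⊗ Bℓ) ≤ ∑ γℓ κ(Aℓ) κ(Bℓ)` with
`γℓ = λmin(Aℓ)λmin(Bℓ) / ∑ᵢ λmin(Aᵢ)λmin(Bᵢ)`. -/
theorem stmt_9 {L k d : ℕ} (A : Fin L → Matrix (Fin k) (Fin k) ℝ)
    (B : Fin L → Matrix (Fin d) (Fin d) ℝ)
    (hA : ∀ ℓ, (A ℓ).PosSemidef) (hB : ∀ ℓ, (B ℓ).PosSemidef)
    (hS : (∑ ℓ, A ℓ ⊗ₖ B ℓ).IsHermitian)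
    (hpos : ∀ ℓ, 0 < (⨅ i, (hA ℓ).1.eigenvalues i) * (⨅ i, (hB ℓ).1.eigenvalues i)) :
    (⨆ i, hS.eigenvalues i) / (⨅ i, hS.eigenvalues i) ≤
      ∑ ℓ, ((⨅ i, (hA ℓ).1.eigenvalues i) * (⨅ i, (hB ℓ).1.eigenvalues i) /
            ∑ j, (⨅ i, (hA j).1.eigenvalues i) * (⨅ i, (hB j).1.eigenvalues i)) *
          (((⨆ i, (hA ℓ).1.eigenvalues i) / (⨅ i, (hA ℓ).1.eigenvalues i)) *
           ((⨆ i, (hB ℓ).1.eigenvalues i) / (⨅ i, (hB ℓ).1.eigenvalues i))) := by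
  rcases Nat.eq_zero_or_pos L with hL0 | hL
  · subst hL0
    have h0 : ∀ i, hS.eigenvalues i = 0 := by
      intro i
      rw [hS.eigenvalues_eq i]
      simp
    simp only [h0]
    simp only [h0, Finset.univ_eq_empty, Finset.sum_empty]
    rcases isEmpty_or_nonempty (Fin k × Fin d) with he | hne
    · simp [Real.iSup_of_isEmpty]
    · simp [ciSup_const]
  rcases Nat.eq_zero_or_pos k with hk0 | hk
  · exfalso
    subst hk0
    have := hpos ⟨0, hL⟩
    have hz : (⨅ i : Fin 0, (hA ⟨0, hL⟩).1.eigenvalues i) = 0 := Real.iInf_of_isEmpty _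
    rw [hz, zero_mul] at this
    exact lt_irrefl 0 this
  rcases Nat.eq_zero_or_pos d with hd0 | hd
  · exfalso
    subst hd0
    have := hpos ⟨0, hL⟩
    have hz : (⨅ i : Fin 0, (hB ⟨0, hL⟩).1.eigenvalues i) = 0 := Real.iInf_of_isEmpty _
    rw [hz, mul_zero] at this
    exact lt_irrefl 0 this
  exact main_aux A B hA hB hS _ _ _ _ (fun _ => rfl) (fun _ => rfl) (fun _ => rfl) (fun _ => rfl)
    hL hk hd hpos
end

section
/- Let X ∈ ℝ^{d×n}, W ∈ ℝ^{k×m}, V ∈ ℝ^{m×d}, and for each i = 1,…,m let Λ^i be an n×n diagonal matrix whose diagonal entries lie in {α, 1} for a constant α ∈ (0,1]. Define Γ = ∑_{i=1}^m Λ^i Xᵀ V_{i,•}ᵀ V_{i,•} X Λ^i and Ĝ = ∑_{i=1}^m Λ^i XᵀX Λ^i ⊗ (W_{•,i} W_{•,i}ᵀ) + Γ ⊗ I_k, where W_{•,i} is the i-th column of W and V_{i,•} the i-th row of V. If α²σ_min(X)²σ_min(W)² + λ_min(Γ) > 0, then κ(Ĝ) ≤ (σ_max(X)²σ_max(W)²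 + λ_max(Γ)) / (α²σ_min(X)²σ_min(W)² + λ_min(Γ)). -/
set_option linter.unusedSectionVars false
set_option maxHeartbeats 1000000


open Matrix Kronecker

variable {N M ι : Type*} [Fintype N] [Fintype M] [DecidableEq N] [DecidableEq M]

lemma psd_smul {A : Matrix N N ℝ} (hA : A.PosSemidef) {c : ℝ} (hc : 0 ≤ c) :
    (c • A).PosSemidef := by
  refine Matrix.PosSemidef.of_dotProduct_mulVec_nonneg ?_ fun x => ?_
  · unfold Matrix.IsHermitian
    rw [conjTranspose_smul, hA.1]
    simp
  · rw [smul_mulVec, dotProduct_smul]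
    exact mul_nonneg hc (hA.dotProduct_mulVec_nonneg x)

lemma psd_sum_s16 {s : Finset ι} {f : ι → Matrix N N ℝ} (h : ∀ i ∈ s, (f i).PosSemidef) :
    (∑ i ∈ s, f i).PosSemidef := by
  classical
  induction s using Finset.induction with
  | empty => simpa using Matrix.PosSemidef.zero
  | insert _ _ hx ih =>
    rw [Finset.sum_insert hx]
    exact (h _ (Finset.mem_insert_self _ _)).add (ih fun i hi => h i (Finset.mem_insert_of_mem hi))

lemma kron_conjTranspose (A : Matrix N N ℝ) (B : Matrix M M ℝ) :
    Aᴴ ⊗ₖ Bᴴ = (A ⊗ₖ B)ᴴ := by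
  ext ⟨i, p⟩ ⟨j, q⟩
  simp [conjTranspose_apply, kroneckerMap_apply]

lemma psd_kron {A : Matrix N N ℝ} {B : Matrix M M ℝ} (hA : A.PosSemidef) (hB : B.PosSemidef) :
    (A ⊗ₖ B).PosSemidef := by
  exact hA.kronecker hB

lemma psd_vecMulVec (v : N → ℝ) : (vecMulVec v v).PosSemidef := by
  have h : vecMulVec v v = (Matrix.replicateRow Unit v)ᴴ * Matrix.replicateRow Unit v := by
    ext i j
    simp [vecMulVec_apply, Matrix.mul_apply, Matrix.replicateRow_apply, mul_comm]
  rw [h]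
  exact Matrix.posSemidef_conjTranspose_mul_self _

lemma dot_self_eigenvectorBasis {A : Matrix N N ℝ} (hA : A.IsHermitian) (i : N) :
    (⇑(hA.eigenvectorBasis i) : N → ℝ) ⬝ᵥ ⇑(hA.eigenvectorBasis i) = 1 := by
  have h := hA.eigenvectorBasis.orthonormal.1 i
  have h2 := EuclideanSpace.inner_eq_star_dotProduct (hA.eigenvectorBasis i) (hA.eigenvectorBasis i)
  rw [real_inner_self_eq_norm_sq, h] at h2
  simpa [dotProduct] using h2.symm

lemma smul_one_sub_psd {A : Matrix N N ℝ} (hA : A.IsHermitian) {c : ℝ}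
    (h : ∀ i, hA.eigenvalues i ≤ c) : (c • (1 : Matrix N N ℝ) - A).PosSemidef := by
  set U : Matrix N N ℝ := (hA.eigenvectorUnitary : Matrix N N ℝ) with hU
  have hUU : U * star U = 1 := Matrix.mem_unitaryGroup_iff.mp hA.eigenvectorUnitary.2
  have key : c • (1 : Matrix N N ℝ) - A
      = U * (Matrix.diagonal (fun i => c - hA.eigenvalues i)) * star U := by
    have hd : Matrix.diagonal (fun i => c - hA.eigenvalues i)
        = c • (1 : Matrix N N ℝ) - Matrix.diagonal hA.eigenvalues := by
      ext j l
      rcases eq_or_ne j l with rfl | hne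
      · simp [Matrix.one_apply]
      · simp [Matrix.diagonal_apply_ne _ hne, Matrix.one_apply_ne hne]
    rw [hd, Matrix.mul_sub, Matrix.sub_mul]
    have : U * (c • (1 : Matrix N N ℝ)) * star U = c • (1 : Matrix N N ℝ) := by
      rw [Matrix.mul_smul, Matrix.smul_mul, mul_one, hUU]
    rw [this]
    congr 1
    have hspec := hA.spectral_theorem
    simpa using hspec
  rw [key, Matrix.star_eq_conjTranspose]
  exact (Matrix.PosSemidef.diagonal (fun i => sub_nonneg.mpr (h i))).mul_mul_conjTranspose_same U

lemma sub_smul_one_psd {A : Matrix N N ℝ} (hA : A.IsHermitian) {c : ℝ}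
    (h : ∀ i, c ≤ hA.eigenvalues i) : (A - c • (1 : Matrix N N ℝ)).PosSemidef := by
  set U : Matrix N N ℝ := (hA.eigenvectorUnitary : Matrix N N ℝ) with hU
  have hUU : U * star U = 1 := Matrix.mem_unitaryGroup_iff.mp hA.eigenvectorUnitary.2
  have key : A - c • (1 : Matrix N N ℝ)
      = U * (Matrix.diagonal (fun i => hA.eigenvalues i - c)) * star U := by
    have hd : Matrix.diagonal (fun i => hA.eigenvalues i - c)
        = Matrix.diagonal hA.eigenvalues - c • (1 : Matrix N N ℝ) := by
      ext j l
      rcases eq_or_ne j l with rfl | hne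
      · simp [Matrix.one_apply]
      · simp [Matrix.diagonal_apply_ne _ hne, Matrix.one_apply_ne hne]
    rw [hd, Matrix.mul_sub, Matrix.sub_mul]
    have : U * (c • (1 : Matrix N N ℝ)) * star U = c • (1 : Matrix N N ℝ) := by
      rw [Matrix.mul_smul, Matrix.smul_mul, mul_one, hUU]
    rw [this]
    congr 1
    have hspec := hA.spectral_theorem
    simpa using hspec
  rw [key, Matrix.star_eq_conjTranspose]
  exact (Matrix.PosSemidef.diagonal (fun i => sub_nonneg.mpr (h i))).mul_mul_conjTranspose_same U

lemma eigenvalues_le_of_psd {A : Matrix N N ℝ} (hA : A.IsHermitian) {c : ℝ}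
    (h : (c • (1 : Matrix N N ℝ) - A).PosSemidef) (i : N) : hA.eigenvalues i ≤ c := by
  have h2 := h.dotProduct_mulVec_nonneg ⇑(hA.eigenvectorBasis i)
  rw [Matrix.sub_mulVec, Matrix.smul_mulVec, Matrix.one_mulVec, star_trivial,
    dotProduct_sub, dotProduct_smul] at h2
  rw [dot_self_eigenvectorBasis] at h2
  have h3 : hA.eigenvalues i = ⇑(hA.eigenvectorBasis i) ⬝ᵥ A *ᵥ ⇑(hA.eigenvectorBasis i) := by
    simpa using hA.eigenvalues_eq i
  rw [← h3] at h2
  simpa using h2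

lemma le_eigenvalues_of_psd {A : Matrix N N ℝ} (hA : A.IsHermitian) {c : ℝ}
    (h : (A - c • (1 : Matrix N N ℝ)).PosSemidef) (i : N) : c ≤ hA.eigenvalues i := by
  have h2 := h.dotProduct_mulVec_nonneg ⇑(hA.eigenvectorBasis i)
  rw [Matrix.sub_mulVec, Matrix.smul_mulVec, Matrix.one_mulVec, star_trivial,
    dotProduct_sub, dotProduct_smul] at h2
  rw [dot_self_eigenvectorBasis] at h2
  have h3 : hA.eigenvalues i = ⇑(hA.eigenvectorBasis i) ⬝ᵥ A *ᵥ ⇑(hA.eigenvectorBasis i) := by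
    simpa using hA.eigenvalues_eq i
  rw [← h3] at h2
  simpa using h2

lemma kron_sum {k : ℕ} (A : Matrix N N ℝ) {s : Finset ι} (B : ι → Matrix (Fin k) (Fin k) ℝ) :
    A ⊗ₖ (∑ i ∈ s, B i) = ∑ i ∈ s, A ⊗ₖ B i := by
  ext ⟨i, p⟩ ⟨j, q⟩
  simp [kroneckerMap_apply, Finset.mul_sum, Matrix.sum_apply]

lemma sub_kron (A B : Matrix N N ℝ) (C : Matrix M M ℝ) :
    (A - B) ⊗ₖ C = A ⊗ₖ C - B ⊗ₖ C := by
  ext ⟨i, p⟩ ⟨j, q⟩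
  simp [kroneckerMap_apply, sub_mul]

lemma kron_sub (A : Matrix N N ℝ) (B C : Matrix M M ℝ) :
    A ⊗ₖ (B - C) = A ⊗ₖ B - A ⊗ₖ C := by
  ext ⟨i, p⟩ ⟨j, q⟩
  simp [kroneckerMap_apply, mul_sub]

lemma sum_vecMulVec_col {k m : ℕ} (W : Matrix (Fin k) (Fin m) ℝ) :
    ∑ i, vecMulVec (fun a => W a i) (fun a => W a i) = W * Wᵀ := by
  ext a b
  simp [Matrix.sum_apply, vecMulVec_apply, Matrix.mul_apply]

lemma diag_conj_upper (lam : N → ℝ) (M : Matrix N N ℝ) (c : ℝ) :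
    c • (1 : Matrix N N ℝ) - diagonal lam * M * diagonal lam
      = diagonal lam * (c • (1 : Matrix N N ℝ) - M) * (diagonal lam)ᴴ
        + diagonal (fun j => c * (1 - lam j ^ 2)) := by
  rw [Matrix.diagonal_conjTranspose]
  ext j l
  rcases eq_or_ne j l with rfl | hne
  · simp [Matrix.mul_apply, Matrix.one_apply, Matrix.diagonal]
    ring
  · simp [Matrix.mul_diagonal, Matrix.diagonal_mul, Matrix.one_apply_ne hne,
      Matrix.diagonal_apply_ne _ hne]

lemma diag_conj_lower (lam : N → ℝ) (M : Matrix N N ℝ) (c β : ℝ) :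
    diagonal lam * M * diagonal lam - (β * c) • (1 : Matrix N N ℝ)
      = diagonal lam * (M - c • (1 : Matrix N N ℝ)) * (diagonal lam)ᴴ
        + diagonal (fun j => c * (lam j ^ 2 - β)) := by
  rw [Matrix.diagonal_conjTranspose]
  ext j l
  rcases eq_or_ne j l with rfl | hne
  · simp [Matrix.mul_apply, Matrix.one_apply, Matrix.diagonal]
    ring
  · simp [Matrix.mul_diagonal, Matrix.diagonal_mul, Matrix.one_apply_ne hne,
      Matrix.diagonal_apply_ne _ hne]

/-- Gauss–Newton condition number bound for a one-hidden-layer Leaky-ReLU network with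
negative slope `α`. Here `Λ i` is the diagonal of activation derivatives (entries in
`{α, 1}`), `Γ = ∑ᵢ Λⁱ Xᵀ V_{i,•}ᵀ V_{i,•} X Λⁱ`, and
`Ĝ = ∑ᵢ Λⁱ XᵀX Λⁱ ⊗ W_{•,i}W_{•,i}ᵀ + Γ ⊗ I_k`. The singular values are encoded as
`σ_max(X)² = λ_max(XᵀX)`, `σ_min(X)² = λ_min(XᵀX)`, `σ_max(W)² = λ_max(WWᵀ)`,
`σ_min(W)² = λ_min(WWᵀ)`. -/
theorem stmt_16 {d n k m : ℕ} (α : ℝ) (hα0 : 0 < α) (hα1 : α ≤ 1)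
    (X : Matrix (Fin d) (Fin n) ℝ) (W : Matrix (Fin k) (Fin m) ℝ)
    (V : Matrix (Fin m) (Fin d) ℝ) (Λ : Fin m → Fin n → ℝ)
    (hΛ : ∀ i j, Λ i j = α ∨ Λ i j = 1)
    (Γ : Matrix (Fin n) (Fin n) ℝ)
    (hΓdef : Γ = ∑ i, Matrix.diagonal (Λ i) *
        Matrix.vecMulVec (Matrix.vecMul (fun l => V i l) X) (Matrix.vecMul (fun l => V i l) X) *
        Matrix.diagonal (Λ i))
    (G : Matrix (Fin n × Fin k) (Fin n × Fin k) ℝ)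
    (hGdef : G = (∑ i, (Matrix.diagonal (Λ i) * (Xᵀ * X) * Matrix.diagonal (Λ i)) ⊗ₖ
        Matrix.vecMulVec (fun a => W a i) (fun a => W a i)) +
        Γ ⊗ₖ (1 : Matrix (Fin k) (Fin k) ℝ))
    (hXX : (Xᵀ * X).IsHermitian) (hWW : (W * Wᵀ).IsHermitian)
    (hΓ : Γ.IsHermitian) (hG : G.IsHermitian)
    (hpos : 0 < α ^ 2 * (⨅ i, hXX.eigenvalues i) * (⨅ i, hWW.eigenvalues i) +
        (⨅ i, hΓ.eigenvalues i)) :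
    (⨆ i, hG.eigenvalues i) / (⨅ i, hG.eigenvalues i) ≤
      ((⨆ i, hXX.eigenvalues i) * (⨆ i, hWW.eigenvalues i) + (⨆ i, hΓ.eigenvalues i)) /
        (α ^ 2 * (⨅ i, hXX.eigenvalues i) * (⨅ i, hWW.eigenvalues i) +
          (⨅ i, hΓ.eigenvalues i)) := by
  classical
  have hΓpsd : Γ.PosSemidef := by
    rw [hΓdef]
    refine psd_sum_s16 fun i _ => ?_
    have hD : (Matrix.diagonal (Λ i))ᴴ = Matrix.diagonal (Λ i) := by
      simp [Matrix.diagonal_conjTranspose]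
    have := (psd_vecMulVec (Matrix.vecMul (fun l => V i l) X)).mul_mul_conjTranspose_same
      (Matrix.diagonal (Λ i))
    rwa [hD] at this
  have hXXpsd : (Xᵀ * X).PosSemidef := by
    have := Matrix.posSemidef_conjTranspose_mul_self X
    rwa [Matrix.conjTranspose_eq_transpose_of_trivial] at this
  have hWWpsd : (W * Wᵀ).PosSemidef := by
    have := Matrix.posSemidef_self_mul_conjTranspose W
    rwa [Matrix.conjTranspose_eq_transpose_of_trivial] at this
  rcases isEmpty_or_nonempty (Fin n × Fin k) with hemp | hnemp
  · haveI := hemp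
    rw [Real.iSup_of_isEmpty hG.eigenvalues, Real.iInf_of_isEmpty hG.eigenvalues, zero_div]
    refine div_nonneg ?_ hpos.le
    rcases isEmpty_or_nonempty (Fin n) with hn | hn
    · haveI := hn
      rw [Real.iSup_of_isEmpty hXX.eigenvalues, Real.iSup_of_isEmpty hΓ.eigenvalues]
      simp
    · haveI : IsEmpty (Fin k) := by
        rcases isEmpty_or_nonempty (Fin k) with h | h
        · exact h
        · exact absurd ⟨hn.some, h.some⟩ (not_nonempty_iff.mpr hemp)
      rw [Real.iSup_of_isEmpty hWW.eigenvalues, mul_zero, zero_add]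
      exact le_ciSup_of_le (Set.Finite.bddAbove (Set.finite_range _)) hn.some
        (hΓpsd.eigenvalues_nonneg hn.some)
  · haveI hn : Nonempty (Fin n) := ⟨hnemp.some.1⟩
    haveI hk : Nonempty (Fin k) := ⟨hnemp.some.2⟩
    set a := ⨆ i, hXX.eigenvalues i with ha
    set a' := ⨅ i, hXX.eigenvalues i with ha'
    set b := ⨆ i, hWW.eigenvalues i with hb
    set b' := ⨅ i, hWW.eigenvalues i with hb'
    set g := ⨆ i, hΓ.eigenvalues i with hg
    set g' := ⨅ i, hΓ.eigenvalues i with hg'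
    have hXb : ∀ i, hXX.eigenvalues i ≤ a :=
      fun i => le_ciSup (Set.Finite.bddAbove (Set.finite_range _)) i
    have hXlb : ∀ i, a' ≤ hXX.eigenvalues i :=
      fun i => ciInf_le (Set.Finite.bddBelow (Set.finite_range _)) i
    have hWb : ∀ i, hWW.eigenvalues i ≤ b :=
      fun i => le_ciSup (Set.Finite.bddAbove (Set.finite_range _)) i
    have hWlb : ∀ i, b' ≤ hWW.eigenvalues i :=
      fun i => ciInf_le (Set.Finite.bddBelow (Set.finite_range _)) i
    have hGb : ∀ i, hΓ.eigenvalues i ≤ g :=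
      fun i => le_ciSup (Set.Finite.bddAbove (Set.finite_range _)) i
    have hGlb : ∀ i, g' ≤ hΓ.eigenvalues i :=
      fun i => ciInf_le (Set.Finite.bddBelow (Set.finite_range _)) i
    have ha'0 : 0 ≤ a' := le_ciInf fun i => hXXpsd.eigenvalues_nonneg i
    have ha0 : 0 ≤ a := le_trans (hXXpsd.eigenvalues_nonneg hn.some) (hXb hn.some)
    have hb'0 : 0 ≤ b' := le_ciInf fun i => hWWpsd.eigenvalues_nonneg i
    have PXup : (a • (1 : Matrix (Fin n) (Fin n) ℝ) - Xᵀ * X).PosSemidef :=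
      smul_one_sub_psd hXX hXb
    have PXlo : (Xᵀ * X - a' • (1 : Matrix (Fin n) (Fin n) ℝ)).PosSemidef :=
      sub_smul_one_psd hXX hXlb
    have PWup : (b • (1 : Matrix (Fin k) (Fin k) ℝ) - W * Wᵀ).PosSemidef :=
      smul_one_sub_psd hWW hWb
    have PWlo : (W * Wᵀ - b' • (1 : Matrix (Fin k) (Fin k) ℝ)).PosSemidef :=
      sub_smul_one_psd hWW hWlb
    have PGup : (g • (1 : Matrix (Fin n) (Fin n) ℝ) - Γ).PosSemidef :=
      smul_one_sub_psd hΓ hGb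
    have PGlo : (Γ - g' • (1 : Matrix (Fin n) (Fin n) ℝ)).PosSemidef :=
      sub_smul_one_psd hΓ hGlb
    have hΛle1 : ∀ i j, Λ i j ^ 2 ≤ 1 := by
      intro i j
      rcases hΛ i j with h | h <;> rw [h]
      · calc α ^ 2 ≤ 1 ^ 2 := by nlinarith
        _ = 1 := one_pow 2
      · rw [one_pow]
    have hΛge : ∀ i j, α ^ 2 ≤ Λ i j ^ 2 := by
      intro i j
      rcases hΛ i j with h | h <;> rw [h]
      · nlinarith
    have hTup : ∀ i : Fin m, (a • (1 : Matrix (Fin n) (Fin n) ℝ) -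
        Matrix.diagonal (Λ i) * (Xᵀ * X) * Matrix.diagonal (Λ i)).PosSemidef := by
      intro i
      rw [diag_conj_upper]
      exact (PXup.mul_mul_conjTranspose_same _).add (Matrix.PosSemidef.diagonal
        (by intro j; exact mul_nonneg ha0 (sub_nonneg.mpr (hΛle1 i j))))
    have hTlo : ∀ i : Fin m, (Matrix.diagonal (Λ i) * (Xᵀ * X) * Matrix.diagonal (Λ i) -
        (α ^ 2 * a') • (1 : Matrix (Fin n) (Fin n) ℝ)).PosSemidef := by
      intro i
      rw [diag_conj_lower]
      exact (PXlo.mul_mul_conjTranspose_same _).add (Matrix.PosSemidef.diagonal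
        (by intro j; exact mul_nonneg ha'0 (sub_nonneg.mpr (hΛge i j))))
    -- kronecker sum identities
    have hsum1 : ∀ c : ℝ, ∑ i : Fin m, ((c • (1 : Matrix (Fin n) (Fin n) ℝ) -
          Matrix.diagonal (Λ i) * (Xᵀ * X) * Matrix.diagonal (Λ i)) ⊗ₖ
          Matrix.vecMulVec (fun a => W a i) (fun a => W a i))
        = c • ((1 : Matrix (Fin n) (Fin n) ℝ) ⊗ₖ (W * Wᵀ)) -
          ∑ i : Fin m, (Matrix.diagonal (Λ i) * (Xᵀ * X) * Matrix.diagonal (Λ i)) ⊗ₖ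
            Matrix.vecMulVec (fun a => W a i) (fun a => W a i) := by
      intro c
      rw [← sum_vecMulVec_col (W := W), kron_sum, Finset.smul_sum, ← Finset.sum_sub_distrib]
      refine Finset.sum_congr rfl fun i _ => ?_
      rw [sub_kron, Matrix.smul_kronecker]
    have hsum1' : ∀ c : ℝ, ∑ i : Fin m, ((Matrix.diagonal (Λ i) * (Xᵀ * X) * Matrix.diagonal (Λ i)
          - c • (1 : Matrix (Fin n) (Fin n) ℝ)) ⊗ₖ
          Matrix.vecMulVec (fun a => W a i) (fun a => W a i))
        = (∑ i : Fin m, (Matrix.diagonal (Λ i) * (Xᵀ * X) * Matrix.diagonal (Λ i)) ⊗ₖ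
            Matrix.vecMulVec (fun a => W a i) (fun a => W a i)) -
          c • ((1 : Matrix (Fin n) (Fin n) ℝ) ⊗ₖ (W * Wᵀ)) := by
      intro c
      rw [← sum_vecMulVec_col (W := W), kron_sum, Finset.smul_sum, ← Finset.sum_sub_distrib]
      refine Finset.sum_congr rfl fun i _ => ?_
      rw [sub_kron, Matrix.smul_kronecker]
    have hterm2 : a • ((1 : Matrix (Fin n) (Fin n) ℝ) ⊗ₖ
          (b • (1 : Matrix (Fin k) (Fin k) ℝ) - W * Wᵀ))
        = (a * b) • (1 : Matrix (Fin n × Fin k) (Fin n × Fin k) ℝ) -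
          a • ((1 : Matrix (Fin n) (Fin n) ℝ) ⊗ₖ (W * Wᵀ)) := by
      rw [kron_sub, Matrix.kronecker_smul, Matrix.one_kronecker_one, smul_sub, smul_smul]
    have hterm2' : (α ^ 2 * a') • ((1 : Matrix (Fin n) (Fin n) ℝ) ⊗ₖ
          (W * Wᵀ - b' • (1 : Matrix (Fin k) (Fin k) ℝ)))
        = (α ^ 2 * a') • ((1 : Matrix (Fin n) (Fin n) ℝ) ⊗ₖ (W * Wᵀ)) -
          (α ^ 2 * a' * b') • (1 : Matrix (Fin n × Fin k) (Fin n × Fin k) ℝ) := by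
      rw [kron_sub, Matrix.kronecker_smul, Matrix.one_kronecker_one, smul_sub, smul_smul]
    have hterm3 : (g • (1 : Matrix (Fin n) (Fin n) ℝ) - Γ) ⊗ₖ (1 : Matrix (Fin k) (Fin k) ℝ)
        = g • (1 : Matrix (Fin n × Fin k) (Fin n × Fin k) ℝ) -
          Γ ⊗ₖ (1 : Matrix (Fin k) (Fin k) ℝ) := by
      rw [sub_kron, Matrix.smul_kronecker, Matrix.one_kronecker_one]
    have hterm3' : (Γ - g' • (1 : Matrix (Fin n) (Fin n) ℝ)) ⊗ₖ (1 : Matrix (Fin k) (Fin k) ℝ)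
        = Γ ⊗ₖ (1 : Matrix (Fin k) (Fin k) ℝ) -
          g' • (1 : Matrix (Fin n × Fin k) (Fin n × Fin k) ℝ) := by
      rw [sub_kron, Matrix.smul_kronecker, Matrix.one_kronecker_one]
    have hup : ((a * b + g) • (1 : Matrix (Fin n × Fin k) (Fin n × Fin k) ℝ) - G).PosSemidef := by
      have hrw : (a * b + g) • (1 : Matrix (Fin n × Fin k) (Fin n × Fin k) ℝ) - G
          = (∑ i : Fin m, ((a • (1 : Matrix (Fin n) (Fin n) ℝ) -
              Matrix.diagonal (Λ i) * (Xᵀ * X) * Matrix.diagonal (Λ i)) ⊗ₖ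
              Matrix.vecMulVec (fun a => W a i) (fun a => W a i)))
            + a • ((1 : Matrix (Fin n) (Fin n) ℝ) ⊗ₖ
              (b • (1 : Matrix (Fin k) (Fin k) ℝ) - W * Wᵀ))
            + (g • (1 : Matrix (Fin n) (Fin n) ℝ) - Γ) ⊗ₖ (1 : Matrix (Fin k) (Fin k) ℝ) := by
        rw [hGdef, hsum1, hterm2, hterm3, add_smul]
        abel
      rw [hrw]
      exact ((psd_sum_s16 fun i _ => psd_kron (hTup i) (psd_vecMulVec _)).add
        (psd_smul (psd_kron Matrix.PosSemidef.one PWup) ha0)).add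
        (psd_kron PGup Matrix.PosSemidef.one)
    have hlo : (G - (α ^ 2 * a' * b' + g') •
        (1 : Matrix (Fin n × Fin k) (Fin n × Fin k) ℝ)).PosSemidef := by
      have hrw : G - (α ^ 2 * a' * b' + g') • (1 : Matrix (Fin n × Fin k) (Fin n × Fin k) ℝ)
          = (∑ i : Fin m, ((Matrix.diagonal (Λ i) * (Xᵀ * X) * Matrix.diagonal (Λ i) -
              (α ^ 2 * a') • (1 : Matrix (Fin n) (Fin n) ℝ)) ⊗ₖ
              Matrix.vecMulVec (fun a => W a i) (fun a => W a i)))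
            + (α ^ 2 * a') • ((1 : Matrix (Fin n) (Fin n) ℝ) ⊗ₖ
              (W * Wᵀ - b' • (1 : Matrix (Fin k) (Fin k) ℝ)))
            + (Γ - g' • (1 : Matrix (Fin n) (Fin n) ℝ)) ⊗ₖ (1 : Matrix (Fin k) (Fin k) ℝ) := by
        rw [hGdef, hsum1', hterm2', hterm3', add_smul]
        abel
      rw [hrw]
      exact ((psd_sum_s16 fun i _ => psd_kron (hTlo i) (psd_vecMulVec _)).add
        (psd_smul (psd_kron Matrix.PosSemidef.one PWlo) (mul_nonneg (sq_nonneg α) ha'0))).add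
        (psd_kron PGlo Matrix.PosSemidef.one)
    have hmax : ∀ i, hG.eigenvalues i ≤ a * b + g := eigenvalues_le_of_psd hG hup
    have hmin : ∀ i, α ^ 2 * a' * b' + g' ≤ hG.eigenvalues i := le_eigenvalues_of_psd hG hlo
    have h1 : (⨆ i, hG.eigenvalues i) ≤ a * b + g := ciSup_le hmax
    have h2 : α ^ 2 * a' * b' + g' ≤ ⨅ i, hG.eigenvalues i := le_ciInf hmin
    have hnum0 : 0 ≤ a * b + g :=
      le_trans hpos.le (le_trans (hmin hnemp.some) (hmax hnemp.some))
    exact div_le_div₀ hnum0 h1 hpos h2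
end
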